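/- For every x, y ∈ Γ for which x + y is defined, (x + y) ∸̃ y ≤ x, where x ∸̃ y := sup{ x ∸ q° | y < q° ≤ x } is the second partial subtraction; moreover (x+y) ∸̃ y = ι⁻(γ(x)). -/
import Mathlib


open scoped Classical

/-- The carrier of the "doubled unit interval" `Γ`: pairs `(r, b)` ordered
lexicographically, where `b = true` represents an exact value `r°`
(which must be rational) and `b = false` represents an approximation `r⁻`
(which must satisfy `r > 0`). -/
def GammaCarrier : Set (Lex (ℝ × Bool)) :=
  {p | 0 ≤ (ofLex p).1 ∧ (ofLex p).1 ≤ 1 ∧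
    ((ofLex p).2 = true → ∃ q : ℚ, (q : ℝ) = (ofLex p).1) ∧
    ((ofLex p).2 = false → 0 < (ofLex p).1)}

/-- The doubled unit interval `Γ`, with the (total) order inherited from the
lexicographic product: `r* < s*` iff `r < s`, and `q⁻ < q°` immediately. -/
abbrev Gamma : Type := {p : Lex (ℝ × Bool) // p ∈ GammaCarrier}

theorem mem_gammaCarrier {a : ℝ} {b : Bool} (h1 : 0 ≤ a) (h2 : a ≤ 1)
    (h3 : b = true → ∃ q : ℚ, (q : ℝ) = a) (h4 : b = false → 0 < a) :
    toLex (a, b) ∈ GammaCarrier := ⟨h1, h2, h3, h4⟩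

/-- The underlying real number of an element of `Γ` (the map `γ`). -/
def γmap (x : Gamma) : ℝ := (ofLex x.1).1

/-- An element of `Γ` is exact iff it is of `°`-type. -/
def gexact (x : Gamma) : Prop := (ofLex x.1).2 = true

theorem gmem (x : Gamma) : 0 ≤ (ofLex x.1).1 ∧ (ofLex x.1).1 ≤ 1 ∧
    ((ofLex x.1).2 = true → ∃ q : ℚ, (q : ℝ) = (ofLex x.1).1) ∧
    ((ofLex x.1).2 = false → 0 < (ofLex x.1).1) := x.2

/-- Smart constructor for `Γ`: clamps `r` into `[0,1]`, and produces the exact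
value `r°` if `e = true` and `r` is rational (or `r = 0`), and `r⁻` otherwise. -/
noncomputable def mk' (r : ℝ) (e : Bool) : Gamma :=
  if h : (e = true ∧ ∃ q : ℚ, (q : ℝ) = max 0 (min 1 r)) ∨ max 0 (min 1 r) = 0 then
    ⟨toLex (max 0 (min 1 r), true),
      mem_gammaCarrier (le_max_left 0 _) (max_le zero_le_one (min_le_left 1 r))
        (fun _ => h.elim (fun h' => h'.2) (fun h0 => ⟨0, by rw [h0]; norm_num⟩))
        (fun hc => absurd hc (by simp))⟩
  else
    ⟨toLex (max 0 (min 1 r), false),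
      mem_gammaCarrier (le_max_left 0 _) (max_le zero_le_one (min_le_left 1 r))
        (fun hc => absurd hc (by simp))
        (fun _ => lt_of_le_of_ne (le_max_left 0 _) (fun h0 => h (Or.inr h0.symm)))⟩

/-- `0°`, the bottom element of `Γ`. -/
noncomputable def gzero : Gamma := mk' 0 true
/-- `1°`, the top element of `Γ`. -/
noncomputable def gone : Gamma := mk' 1 true
/-- The section `ι° : [0,1] → Γ`, `r ↦ r°` for rational `r` and `r ↦ r⁻` otherwise. -/
noncomputable def icircR (r : ℝ) : Gamma := mk' r true
/-- The section `ι⁻ : [0,1] → Γ`, `0 ↦ 0°` and `r ↦ r⁻` for `r > 0`. -/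
noncomputable def iminusR (r : ℝ) : Gamma := mk' r false
/-- The exact value `q°` of a rational `q ∈ [0,1]`. -/
noncomputable def gq (q : ℚ) : Gamma := mk' (q : ℝ) true
/-- `ι°` as a map on the unit interval. -/
noncomputable def icirc (r : Set.Icc (0:ℝ) 1) : Gamma := icircR r.1
/-- `ι⁻` as a map on the unit interval. -/
noncomputable def iminusI (r : Set.Icc (0:ℝ) 1) : Gamma := iminusR r.1
/-- `γ : Γ → [0,1]` as a map into the unit interval. -/
noncomputable def gmapI (x : Gamma) : Set.Icc (0:ℝ) 1 := ⟨γmap x, (gmem x).1, (gmem x).2.1⟩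

/-- The partial subtraction `∸` on `Γ` (meaningful when `y ≤ x`):
`r° ∸ s° = (r−s)°`, `r⁻ ∸ s° = (r−s)⁻`, and `r* ∸ s⁻ = (r−s)°` if `r−s ∈ ℚ`,
`(r−s)⁻` otherwise. -/
noncomputable def gsub (x y : Gamma) : Gamma :=
  mk' (γmap x - γmap y)
    (if (gexact x ∧ gexact y) ∨ (¬ gexact y ∧ ∃ q : ℚ, (q : ℝ) = γmap x - γmap y)
      then true else false)

/-- The second partial subtraction `∸̃` on `Γ` (meaningful when `y ≤ x`):
`x ∸̃ x = 0°` and, for `y < x`, `r° ∸̃ s° = r⁻ ∸̃ s⁻ = r⁻ ∸̃ s° = (r−s)⁻` and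
`r° ∸̃ s⁻ = (r−s)°` if `r−s ∈ ℚ`, `(r−s)⁻` otherwise. -/
noncomputable def gsubt (x y : Gamma) : Gamma :=
  mk' (γmap x - γmap y)
    (if gexact x ∧ ¬ gexact y ∧ ∃ q : ℚ, (q : ℝ) = γmap x - γmap y then true else false)

/-- The partial addition `+` on `Γ` (meaningful when `x ≤ 1° ∸ y`):
`r° + s° = (r+s)°` and any sum involving a `⁻`-argument is of `⁻`-type. -/
noncomputable def gadd (x y : Gamma) : Gamma :=
  mk' (γmap x + γmap y) (if gexact x ∧ gexact y then true else false)

/-- A `Γ`-valued (finitely additive, probability) measure on a bounded lattice. -/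
def IsGMeasure {D : Type*} [Lattice D] [BoundedOrder D] (μ : D → Gamma) : Prop :=
  Monotone μ ∧ μ ⊥ = gzero ∧ μ ⊤ = gone ∧
  ∀ a b : D, gsubt (μ a) (μ (a ⊓ b)) ≤ gsub (μ (a ⊔ b)) (μ b) ∧
    gsubt (μ (a ⊔ b)) (μ b) ≤ gsub (μ a) (μ (a ⊓ b))

-- helper lemmas to insert before stmt_9
namespace GHelp

lemma γmap_mk' (r : ℝ) (e : Bool) : γmap (mk' r e) = max 0 (min 1 r) := by
  unfold mk' γmap; split <;> rfl

lemma flag_mk' (r : ℝ) (e : Bool) :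
    (ofLex (mk' r e).1).2 = true ↔
      ((e = true ∧ ∃ q : ℚ, (q : ℝ) = max 0 (min 1 r)) ∨ max 0 (min 1 r) = 0) := by
  unfold mk'; split
  next h => exact iff_of_true rfl h
  next h => exact iff_of_false Bool.false_ne_true h

lemma clamp_eq {r : ℝ} (h0 : 0 ≤ r) (h1 : r ≤ 1) : max 0 (min 1 r) = r := by
  rw [min_eq_right h1, max_eq_right h0]

lemma g_le_iff (x y : Gamma) : x ≤ y ↔
    γmap x < γmap y ∨ (γmap x = γmap y ∧ (ofLex x.1).2 ≤ (ofLex y.1).2) := by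
  have hx : x.1 = toLex (ofLex x.1) := rfl
  have hy : y.1 = toLex (ofLex y.1) := rfl
  show x.1 ≤ y.1 ↔ _
  rw [hx, hy, Prod.Lex.le_iff]
  rfl

lemma g_lt_iff (x y : Gamma) : x < y ↔
    γmap x < γmap y ∨ (γmap x = γmap y ∧ (ofLex x.1).2 < (ofLex y.1).2) := by
  have hx : x.1 = toLex (ofLex x.1) := rfl
  have hy : y.1 = toLex (ofLex y.1) := rfl
  rw [← Subtype.coe_lt_coe, hx, hy, Prod.Lex.lt_iff]
  rfl

lemma γmap_mono {x y : Gamma} (h : x ≤ y) : γmap x ≤ γmap y := by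
  rcases (g_le_iff x y).mp h with h | h
  · exact h.le
  · exact h.1.le

end GHelp

open GHelp

/-- for every `x, y ∈ Γ` for which `x + y` is defined
(i.e. `x ≤ 1° ∸ y`), the second subtraction `(x + y) ∸̃ y`, defined as the
supremum of `{ (x+y) ∸ q° | y < q° ≤ x+y }`, equals `ι⁻(γ(x))`; in particular
`(x + y) ∸̃ y ≤ x`. -/
theorem stmt_9 (x y : Gamma) (hd : x ≤ gsub gone y) :
    IsLUB {z | ∃ q : ℚ, z = gsub (gadd x y) (gq q) ∧ y < gq q ∧ gq q ≤ gadd x y}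
      (iminusR (γmap x)) ∧ iminusR (γmap x) ≤ x := by
  classical
  set a := γmap x with ha
  set b := γmap y with hb
  have hx0 : 0 ≤ a := (gmem x).1
  have hx1 : a ≤ 1 := (gmem x).2.1
  have hy0 : 0 ≤ b := (gmem y).1
  have hy1 : b ≤ 1 := (gmem y).2.1
  have hγone : γmap gone = 1 := by
    rw [gone, γmap_mk', clamp_eq zero_le_one le_rfl]
  have hsub : γmap (gsub gone y) = 1 - b := by
    rw [gsub, γmap_mk', hγone, clamp_eq (by linarith) (by linarith)]
  have hs1 : a + b ≤ 1 := by
    have := γmap_mono hd; rw [hsub] at this; linarith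
  have hadd : γmap (gadd x y) = a + b := by
    rw [gadd, γmap_mk', clamp_eq (by linarith) (by linarith)]
  have hγgq : ∀ q : ℚ, γmap (gq q) = max 0 (min 1 (q:ℝ)) := fun q => by
    rw [gq, γmap_mk']
  have hgqexact : ∀ q : ℚ, (ofLex (gq q).1).2 = true := fun q => by
    rw [gq, flag_mk']
    exact Or.inl ⟨rfl, ⟨max 0 (min 1 q), by push_cast; rfl⟩⟩
  have hγim : γmap (iminusR a) = a := by rw [iminusR, γmap_mk', clamp_eq hx0 hx1]
  -- flag of z = true → flag false fails etc.
  rcases eq_or_lt_of_le hx0 with hza | hpa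
  · -- a = 0 case
    have hbot : ∀ z : Gamma, iminusR a ≤ z := by
      intro z
      rw [g_le_iff, hγim, ← hza]
      rcases eq_or_lt_of_le (gmem z).1 with h0 | h0
      · refine Or.inr ⟨h0, ?_⟩
        have : (ofLex z.1).2 = true := by
          by_contra hc
          rw [Bool.not_eq_true] at hc
          exact absurd ((gmem z).2.2.2 hc) (by rw [← h0]; exact lt_irrefl _)
        rw [this]; exact Bool.le_true _
      · exact Or.inl h0
    refine ⟨⟨?_, fun u _ => hbot u⟩, hbot x⟩
    rintro z ⟨q, rfl, hyq, hqs⟩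
    exfalso
    have h1 : b ≤ γmap (gq q) := γmap_mono hyq.le
    have h2 : γmap (gq q) ≤ a + b := by have := γmap_mono hqs; rwa [hadd] at this
    have heq : γmap (gq q) = b := le_antisymm (by linarith) h1
    rcases (g_lt_iff y (gq q)).mp hyq with h | ⟨_, hfl⟩
    · rw [heq] at h; exact lt_irrefl _ h
    · have hyf : (ofLex y.1).2 = false := (Bool.lt_iff.mp hfl).1
      have hbpos : 0 < b := (gmem y).2.2.2 hyf
      rcases (g_le_iff (gq q) (gadd x y)).mp hqs with h | ⟨_, hfl2⟩
      · rw [heq, hadd, ← hza] at h; linarith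
      · rw [hgqexact q] at hfl2
        have haddflag : (ofLex (gadd x y).1).2 = true := by
          cases hfe : (ofLex (gadd x y).1).2
          · rw [hfe] at hfl2; exact absurd hfl2 (by decide)
          · rfl
        rcases (flag_mk' _ _).mp haddflag with ⟨hif, _⟩ | h0
        · rw [if_neg (fun hc => by
            have := hc.2; unfold gexact at this; rw [hyf] at this; exact Bool.false_ne_true this)] at hif
          exact Bool.false_ne_true hif
        · rw [clamp_eq (by linarith) (by linarith)] at h0; linarith
  · -- 0 < a case
    have hfim : (ofLex (iminusR a).1).2 = false := by
      cases hfe : (ofLex (iminusR a).1).2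
      · rfl
      · exfalso
        rcases (flag_mk' _ _).mp (by rw [iminusR] at hfe; exact hfe) with ⟨h, _⟩ | h0
        · exact Bool.false_ne_true h
        · rw [clamp_eq hx0 hx1] at h0; linarith
    constructor
    constructor
    · -- upper bound
      rintro z ⟨q, rfl, hyq, hqs⟩
      have h1 : b ≤ γmap (gq q) := γmap_mono hyq.le
      have h2 : γmap (gq q) ≤ a + b := by have := γmap_mono hqs; rwa [hadd] at this
      have hγz : γmap (gsub (gadd x y) (gq q)) = a + b - γmap (gq q) := by
        rw [gsub, γmap_mk', hadd, clamp_eq (by linarith) (by linarith)]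
      rw [g_le_iff, hγz, hγim]
      rcases (g_lt_iff y (gq q)).mp hyq with h | ⟨hbe, hfl⟩
      · exact Or.inl (by linarith)
      · -- γ(gq q) = b, y not exact
        have hyf : (ofLex y.1).2 = false := (Bool.lt_iff.mp hfl).1
        refine Or.inr ⟨by rw [← hbe]; ring, ?_⟩
        -- flag of gadd x y is false
        have haddf : (ofLex (gadd x y).1).2 = false := by
          cases hfe : (ofLex (gadd x y).1).2
          · rfl
          · exfalso
            rcases (flag_mk' _ _).mp (by rw [gadd] at hfe; exact hfe) with ⟨hif, _⟩ | h0
            · rw [if_neg (fun hc => by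
                have := hc.2; unfold gexact at this; rw [hyf] at this
                exact Bool.false_ne_true this)] at hif
              exact Bool.false_ne_true hif
            · rw [clamp_eq (by linarith) (by linarith)] at h0; linarith
        have hzf : (ofLex (gsub (gadd x y) (gq q)).1).2 = false := by
          cases hfe : (ofLex (gsub (gadd x y) (gq q)).1).2
          · rfl
          · exfalso
            rcases (flag_mk' _ _).mp (by rw [gsub] at hfe; exact hfe) with ⟨hif, _⟩ | h0
            · rw [if_neg (fun hc => by
                rcases hc with ⟨he, _⟩ | ⟨hne, _⟩
                · have := he; unfold gexact at this; rw [haddf] at this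
                  exact Bool.false_ne_true this
                · exact hne (hgqexact q))] at hif
              exact Bool.false_ne_true hif
            · rw [hadd, clamp_eq (by linarith) (by linarith), ← hbe] at h0; linarith
        rw [hzf, hfim]
    · -- least
      intro u hu
      have hau : a ≤ γmap u := by
        by_contra hc
        push_neg at hc
        have hu0 : 0 ≤ γmap u := (gmem u).1
        obtain ⟨q, hq1, hq2⟩ := exists_rat_btwn (show b < a + b - γmap u by linarith)
        have hq0 : (0:ℝ) ≤ q := by linarith
        have hqle1 : (q:ℝ) ≤ 1 := by linarith
        have hγq : γmap (gq q) = q := by rw [hγgq, clamp_eq hq0 hqle1]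
        have hmem : gsub (gadd x y) (gq q) ∈
            {z | ∃ q : ℚ, z = gsub (gadd x y) (gq q) ∧ y < gq q ∧ gq q ≤ gadd x y} := by
          refine ⟨q, rfl, ?_, ?_⟩
          · rw [g_lt_iff, hγq]; exact Or.inl hq1
          · rw [g_le_iff, hγq, hadd]; exact Or.inl (by linarith)
        have hle := γmap_mono (hu hmem)
        rw [gsub, γmap_mk', hadd, hγq,
          clamp_eq (by linarith) (by linarith)] at hle
        linarith
      rw [g_le_iff, hγim]
      rcases eq_or_lt_of_le hau with h | h
      · exact Or.inr ⟨h, by rw [hfim]; exact Bool.false_le _⟩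
      · exact Or.inl h
    · -- iminusR a ≤ x
      rw [g_le_iff, hγim, hfim]
      exact Or.inr ⟨rfl, Bool.false_le _⟩
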